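/- Let X and Y be jointly distributed random variables on finite sets, let the support Ω_Y of Y be partitioned into m mutually disjoint sets ω₁, …, ω_m, and for each j let ϖ_j = { x ∈ Ω_X : p(x|y) ≠ 0 for some y ∈ ω_j }. If ϖ_j ≠ ϖ_k whenever j ≠ k, then for every α with 1 ≤ α < ∞: H_α(X|Y) ≤ Σ_{j=1}^m Pr[Y ∈ ω_j]^α · ln_α|ϖ_j|. -/

import Mathlib

open Finset

/-- The α-logarithm: `ln_α(ξ) = (ξ^(1-α) - 1)/(1-α)` for `α ≠ 1`, and `ln ξ` for `α = 1`. -/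
noncomputable def alphaLog (α ξ : ℝ) : ℝ :=
  if α = 1 then Real.log ξ else (ξ ^ (1 - α) - 1) / (1 - α)

/-- The Tsallis–Havrda–Charvát entropy of order `α` of a pmf `p` on a finite set. -/
noncomputable def thc (α : ℝ) {S : Type*} [Fintype S] (p : S → ℝ) : ℝ :=
  if α = 1 then -∑ s, p s * Real.log (p s)
  else ((∑ s, p s ^ α) - 1) / (1 - α)

/-- The binary THC entropy `h_α(q)`. -/
noncomputable def binThc (α q : ℝ) : ℝ :=
  if α = 1 then -(q * Real.log q) - (1 - q) * Real.log (1 - q)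
  else (q ^ α + (1 - q) ^ α - 1) / (1 - α)

/-- First conditional THC entropy (Daróczy form): `H_α(X|Y) = Σ_y p(y)^α H_α(X|y)`,
where `p` is the joint pmf of `(X, Y)`.  (Terms with `p(y) = 0` vanish for `α > 0`.) -/
noncomputable def condThc1 (α : ℝ) {SX SY : Type*} [Fintype SX] [Fintype SY]
    (p : SX × SY → ℝ) : ℝ :=
  ∑ y, (∑ x, p (x, y)) ^ α * thc α (fun x => p (x, y) / ∑ x', p (x', y))

/-- Second conditional THC entropy: `H̃_α(X|Y) = Σ_y p(y) H_α(X|y)`,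
where `p` is the joint pmf of `(X, Y)`.  (Terms with `p(y) = 0` vanish.) -/
noncomputable def condThc2 (α : ℝ) {SX SY : Type*} [Fintype SX] [Fintype SY]
    (p : SX × SY → ℝ) : ℝ :=
  ∑ y, (∑ x, p (x, y)) * thc α (fun x => p (x, y) / ∑ x', p (x', y))

/-- The pmf of a random variable `X` defined on a finite sample space with pmf `μ`. -/
noncomputable def distOf {Ω S : Type*} [Fintype Ω] [DecidableEq S]
    (μ : Ω → ℝ) (X : Ω → S) : S → ℝ :=
  fun s => ∑ ω ∈ Finset.univ.filter (fun ω => X ω = s), μ ω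


lemma my_add_rpow_le {a b p : ℝ} (ha : 0 ≤ a) (hb : 0 ≤ b) (hp : 1 ≤ p) :
    a ^ p + b ^ p ≤ (a + b) ^ p := by
  have h := NNReal.add_rpow_le_rpow_add (⟨a, ha⟩ : NNReal) ⟨b, hb⟩ hp
  have h2 := NNReal.coe_le_coe.mpr h
  push_cast at h2
  exact h2

lemma my_sum_rpow_le {ι : Type*} (s : Finset ι) (a : ι → ℝ) (ha : ∀ i, 0 ≤ a i)
    {p : ℝ} (hp : 1 ≤ p) : ∑ i ∈ s, a i ^ p ≤ (∑ i ∈ s, a i) ^ p := by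
  induction s using Finset.cons_induction with
  | empty => simp [Real.zero_rpow (by linarith : p ≠ 0)]
  | cons i s hi ih =>
    rw [Finset.sum_cons, Finset.sum_cons]
    calc a i ^ p + ∑ j ∈ s, a j ^ p ≤ a i ^ p + (∑ j ∈ s, a j) ^ p := by linarith
      _ ≤ (a i + ∑ j ∈ s, a j) ^ p :=
        my_add_rpow_le (ha i) (Finset.sum_nonneg fun j _ => ha j) hp

lemma alphaLog_nonneg {α ξ : ℝ} (hα : 1 ≤ α) (hξ : 1 ≤ ξ) : 0 ≤ alphaLog α ξ := by
  unfold alphaLog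
  split_ifs with h
  · exact Real.log_nonneg hξ
  · have hα' : 1 < α := lt_of_le_of_ne hα (Ne.symm h)
    have h1 : ξ ^ (1 - α) ≤ 1 := Real.rpow_le_one_of_one_le_of_nonpos hξ (by linarith)
    exact div_nonneg_of_nonpos (by linarith) (by linarith)

lemma thc_le_alphaLog {S : Type*} [Fintype S] {α : ℝ} (hα : 1 ≤ α)
    (q : S → ℝ) (hq : ∀ s, 0 ≤ q s) (T : Finset S)
    (hsupp : ∀ s, q s ≠ 0 → s ∈ T) (hq1 : ∑ s, q s = 1) :
    thc α q ≤ alphaLog α (T.card : ℝ) := by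
  classical
  have hsumT : ∑ s ∈ T, q s = 1 := by
    rw [← hq1]
    exact Finset.sum_subset (Finset.subset_univ T) fun s _ hs => by
      by_contra h; exact hs (hsupp s h)
  have hTne : T.Nonempty := by
    rcases T.eq_empty_or_nonempty with h | h
    · rw [h] at hsumT; simp at hsumT
    · exact h
  have hn : (0:ℝ) < T.card := by exact_mod_cast Finset.card_pos.mpr hTne
  unfold thc alphaLog
  split_ifs with h
  · -- α = 1 : Shannon case
    have key : ∀ s ∈ T, -(q s * Real.log (q s)) ≤
        q s * Real.log T.card + (((T.card : ℝ))⁻¹ - q s) := by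
      intro s _
      rcases eq_or_lt_of_le (hq s) with h0 | h0
      · rw [← h0]; simp
      · have h1 : Real.log ((q s * T.card)⁻¹) ≤ (q s * T.card)⁻¹ - 1 :=
          Real.log_le_sub_one_of_pos (by positivity)
        rw [Real.log_inv, Real.log_mul (ne_of_gt h0) (ne_of_gt hn)] at h1
        have h2 := mul_le_mul_of_nonneg_left h1 h0.le
        have heq : q s * (q s * (T.card:ℝ))⁻¹ = ((T.card:ℝ))⁻¹ := by
          field_simp
        rw [mul_sub, heq, mul_one] at h2
        nlinarith [h2]
    have hzero : ∀ s ∈ Finset.univ, s ∉ T → q s * Real.log (q s) = 0 := by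
      intro s _ hs
      have : q s = 0 := by by_contra hne; exact hs (hsupp s hne)
      simp [this]
    calc -∑ s, q s * Real.log (q s)
        = ∑ s ∈ T, -(q s * Real.log (q s)) := by
          rw [← Finset.sum_subset (Finset.subset_univ T) hzero]
          exact (Finset.sum_neg_distrib _).symm
      _ ≤ ∑ s ∈ T, (q s * Real.log T.card + (((T.card:ℝ))⁻¹ - q s)) :=
          Finset.sum_le_sum key
      _ = Real.log T.card := by
          rw [Finset.sum_add_distrib, ← Finset.sum_mul, hsumT, Finset.sum_sub_distrib,
            hsumT, Finset.sum_const, nsmul_eq_mul, mul_inv_cancel₀ (ne_of_gt hn)]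
          ring
  · -- α > 1 case
    have hα' : 1 < α := lt_of_le_of_ne hα (Ne.symm h)
    have hαne : α ≠ 0 := by linarith
    rw [div_le_div_right_of_neg (by linarith : 1 - α < 0)]
    have hsumT' : ∑ s, q s ^ α = ∑ s ∈ T, q s ^ α := by
      refine (Finset.sum_subset (Finset.subset_univ T) fun s _ hs => ?_).symm
      have : q s = 0 := by by_contra hne; exact hs (hsupp s hne)
      rw [this, Real.zero_rpow hαne]
    have hJ := Real.rpow_arith_mean_le_arith_mean_rpow T
      (fun _ => ((T.card:ℝ))⁻¹) q (fun i _ => by positivity)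
      (by rw [Finset.sum_const, nsmul_eq_mul, mul_inv_cancel₀ (ne_of_gt hn)])
      (fun i _ => hq i) hα
    rw [← Finset.mul_sum, ← Finset.mul_sum, hsumT, mul_one] at hJ
    have hpow : ((T.card:ℝ)) ^ (1 - α) = T.card * ((T.card:ℝ))⁻¹ ^ α := by
      rw [Real.inv_rpow hn.le, ← Real.rpow_neg hn.le, sub_eq_add_neg,
        Real.rpow_add hn, Real.rpow_one]
    have h3 : ((T.card:ℝ)) ^ (1 - α) ≤ ∑ s ∈ T, q s ^ α := by
      calc ((T.card:ℝ)) ^ (1 - α) = T.card * ((T.card:ℝ))⁻¹ ^ α := hpow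
        _ ≤ T.card * (((T.card:ℝ))⁻¹ * ∑ s ∈ T, q s ^ α) :=
            mul_le_mul_of_nonneg_left hJ hn.le
        _ = ∑ s ∈ T, q s ^ α := by
            rw [← mul_assoc, mul_inv_cancel₀ (ne_of_gt hn), one_mul]
    rw [hsumT']
    linarith

/-- Let `p` be a joint pmf of `(X, Y)` on finite sets, let the support of
`Y` be partitioned into `m` mutually disjoint sets `ω j`, and let
`ϖ j = {x : p(x|y) ≠ 0 for some y ∈ ω j}`.  If the `ϖ j` are pairwise distinct, then for
every `α ≥ 1`:  `H_α(X|Y) ≤ Σ_j Pr[Y ∈ ω j]^α · ln_α |ϖ j|`. -/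
theorem condThc1_le_partition {SX SY : Type*} [Fintype SX] [Fintype SY]
    (p : SX × SY → ℝ) (hp : ∀ z, 0 ≤ p z) (hp1 : ∑ z, p z = 1)
    (m : ℕ) (ω : Fin m → Finset SY)
    (hdisj : ∀ j k, j ≠ k → Disjoint (ω j) (ω k))
    (hcover : ∀ y : SY, (∑ x, p (x, y)) ≠ 0 ↔ ∃ j, y ∈ ω j)
    (ϖ : Fin m → Finset SX)
    (hϖ : ∀ j, ∀ x : SX, x ∈ ϖ j ↔ ∃ y ∈ ω j, p (x, y) / (∑ x', p (x', y)) ≠ 0)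
    (hdist : ∀ j k, j ≠ k → ϖ j ≠ ϖ k)
    (α : ℝ) (hα : 1 ≤ α) :
    condThc1 α p ≤
      ∑ j, (∑ y ∈ ω j, ∑ x, p (x, y)) ^ α * alphaLog α ((ϖ j).card : ℝ) := by
  unfold condThc1
  classical
  have hαne : α ≠ 0 := by linarith
  set P : SY → ℝ := fun y => ∑ x, p (x, y) with hP
  have hPnn : ∀ y, 0 ≤ P y := fun y => Finset.sum_nonneg fun x _ => hp _
  set f : SY → ℝ := fun y => (P y) ^ α * thc α (fun x => p (x, y) / P y) with hf
  set B : Finset SY := Finset.univ.biUnion (fun j => ω j) with hB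
  have hmemB : ∀ y, y ∈ B ↔ ∃ j, y ∈ ω j := by
    intro y; simp [hB]
  have step1 : ∑ y, f y = ∑ j, ∑ y ∈ ω j, f y := by
    rw [← Finset.sum_biUnion (fun j _ k _ hjk => hdisj j k hjk)]
    refine (Finset.sum_subset (Finset.subset_univ B) fun y _ hy => ?_).symm
    have hPy : P y = 0 := by
      by_contra h
      exact hy ((hmemB y).mpr ((hcover y).mp h))
    simp only [hf, hPy, Real.zero_rpow hαne, zero_mul]
  rw [step1]
  refine Finset.sum_le_sum fun j _ => ?_
  rcases (ω j).eq_empty_or_nonempty with hje | ⟨y₀, hy₀⟩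
  · rw [hje]
    simp [Real.zero_rpow hαne]
  · -- ω j nonempty
    have hPy₀ : P y₀ ≠ 0 := (hcover y₀).mpr ⟨j, hy₀⟩
    have hPy₀' : 0 < P y₀ := lt_of_le_of_ne (hPnn y₀) (Ne.symm hPy₀)
    have hϖne : (ϖ j).Nonempty := by
      have : ∃ x, p (x, y₀) ≠ 0 := by
        by_contra h
        push_neg at h
        exact hPy₀ (Finset.sum_eq_zero fun x _ => h x)
      obtain ⟨x, hx⟩ := this
      exact ⟨x, (hϖ j x).mpr ⟨y₀, hy₀, div_ne_zero hx hPy₀⟩⟩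
    have hL : 0 ≤ alphaLog α ((ϖ j).card : ℝ) :=
      alphaLog_nonneg hα (by exact_mod_cast Finset.card_pos.mpr hϖne)
    have hterm : ∀ y ∈ ω j, f y ≤ (P y) ^ α * alphaLog α ((ϖ j).card : ℝ) := by
      intro y hy
      have hPy : P y ≠ 0 := (hcover y).mpr ⟨j, hy⟩
      have hthc : thc α (fun x => p (x, y) / P y) ≤ alphaLog α ((ϖ j).card : ℝ) := by
        refine thc_le_alphaLog hα _ (fun x => div_nonneg (hp _) (hPnn y)) (ϖ j)
          (fun x hx => (hϖ j x).mpr ⟨y, hy, hx⟩) ?_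
        rw [← Finset.sum_div, div_self hPy]
      exact mul_le_mul_of_nonneg_left hthc (Real.rpow_nonneg (hPnn y) α)
    calc ∑ y ∈ ω j, f y ≤ ∑ y ∈ ω j, (P y) ^ α * alphaLog α ((ϖ j).card : ℝ) :=
          Finset.sum_le_sum hterm
      _ = (∑ y ∈ ω j, (P y) ^ α) * alphaLog α ((ϖ j).card : ℝ) := by
          rw [Finset.sum_mul]
      _ ≤ (∑ y ∈ ω j, P y) ^ α * alphaLog α ((ϖ j).card : ℝ) :=
          mul_le_mul_of_nonneg_right (my_sum_rpow_le _ _ hPnn hα) hL
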